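/- Let a, b₁, b₂, γ be positive reals, c ≠ 0 a real parameter, j a natural number, and ω > 0 a real number with h(ω²) = 0 and h′(ω²) ≠ 0. Then with τ = τ^{(j)}(ω), the number iω is a simple root of Δ_{c,τ}: one has Δ_{c,τ}(iω) = 0 and the λ-derivative 4λ³ + 3Aλ² + 2Bλ + C − c²(2λ + b₁ + b₂)e^{−2λτ} + 2τc²(λ+b₁)(λ+b₂)e^{−2λτ} is nonzero at λ = iω. -/

import Mathlib

noncomputable section

open Real

/-- A = b₁+b₂+2a -/
def Ac (a b1 b2 : ℝ) : ℝ := b1 + b2 + 2*a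
/-- B = 2a(b₁+b₂)+a²+b₁b₂+2γ -/
def Bc (a b1 b2 γ : ℝ) : ℝ := 2*a*(b1+b2) + a^2 + b1*b2 + 2*γ
/-- C = (a+b₁)(ab₂+γ)+(a+b₂)(ab₁+γ) -/
def Cc (a b1 b2 γ : ℝ) : ℝ := (a+b1)*(a*b2+γ) + (a+b2)*(a*b1+γ)
/-- D = (ab₁+γ)(ab₂+γ) -/
def Dc (a b1 b2 γ : ℝ) : ℝ := (a*b1+γ)*(a*b2+γ)
/-- P = A² − 2B -/
def Pc (a b1 b2 γ : ℝ) : ℝ := (Ac a b1 b2)^2 - 2*(Bc a b1 b2 γ)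
/-- Q = B² + 2D − 2AC − c⁴ -/
def Qc (a b1 b2 γ c : ℝ) : ℝ :=
  (Bc a b1 b2 γ)^2 + 2*(Dc a b1 b2 γ) - 2*(Ac a b1 b2)*(Cc a b1 b2 γ) - c^4
/-- R = C² − 2BD − c⁴(b₁²+b₂²) -/
def Rc (a b1 b2 γ c : ℝ) : ℝ :=
  (Cc a b1 b2 γ)^2 - 2*(Bc a b1 b2 γ)*(Dc a b1 b2 γ) - c^4*(b1^2+b2^2)
/-- S = D² − c⁴b₁²b₂² -/
def Sc (a b1 b2 γ c : ℝ) : ℝ := (Dc a b1 b2 γ)^2 - c^4*b1^2*b2^2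
/-- h(z) = z⁴ + Pz³ + Qz² + Rz + S -/
def hq (a b1 b2 γ c z : ℝ) : ℝ :=
  z^4 + Pc a b1 b2 γ*z^3 + Qc a b1 b2 γ c*z^2 + Rc a b1 b2 γ c*z + Sc a b1 b2 γ c
/-- h′(z) = 4z³ + 3Pz² + 2Qz + R -/
def hq' (a b1 b2 γ c z : ℝ) : ℝ :=
  4*z^3 + 3*(Pc a b1 b2 γ)*z^2 + 2*(Qc a b1 b2 γ c)*z + Rc a b1 b2 γ c
/-- The characteristic function Δ_{c,τ}(λ) of the linearization at the trivial equilibrium. -/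
def charFun (a b1 b2 γ c τ : ℝ) (lam : ℂ) : ℂ :=
  (lam^2 + (a+b1 : ℝ)*lam + (a*b1+γ : ℝ)) * (lam^2 + (a+b2 : ℝ)*lam + (a*b2+γ : ℝ))
    - (c^2 : ℝ) * (lam + (b1 : ℝ)) * (lam + (b2 : ℝ)) * Complex.exp ((-2) * lam * (τ : ℝ))
/-- N(ω) = c²[(b₁+b₂)²ω² + (ω²−b₁b₂)²] -/
def Nfun (b1 b2 c ω : ℝ) : ℝ := c^2*((b1+b2)^2*ω^2 + (ω^2 - b1*b2)^2)
/-- a*(ω) -/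
def aStar (a b1 b2 γ c ω : ℝ) : ℝ :=
  ((ω^4 - Bc a b1 b2 γ*ω^2 + Dc a b1 b2 γ)*(b1+b2)*ω
    + (Ac a b1 b2*ω^3 - Cc a b1 b2 γ*ω)*(b1*b2 - ω^2)) / Nfun b1 b2 c ω
/-- b*(ω) -/
def bStar (a b1 b2 γ c ω : ℝ) : ℝ :=
  ((ω^4 - Bc a b1 b2 γ*ω^2 + Dc a b1 b2 γ)*(b1*b2 - ω^2)
    + (-(Ac a b1 b2)*ω^3 + Cc a b1 b2 γ*ω)*(b1+b2)*ω) / Nfun b1 b2 c ω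
/-- the critical delays τ^{(j)}(ω) -/
def tauJ (a b1 b2 γ c : ℝ) (j : ℕ) (ω : ℝ) : ℝ :=
  if 0 ≤ aStar a b1 b2 γ c ω then
    (1/(2*ω)) * (Real.arccos (bStar a b1 b2 γ c ω) + 2*(j:ℝ)*Real.pi)
  else
    (1/(2*ω)) * (2*Real.pi - Real.arccos (bStar a b1 b2 γ c ω) + 2*(j:ℝ)*Real.pi)

/-- The λ-derivative of the characteristic function Δ_{c,τ}. -/
def dcharFun (a b1 b2 γ c τ : ℝ) (lam : ℂ) : ℂ :=
  4*lam^3 + 3*(Ac a b1 b2 : ℝ)*lam^2 + 2*(Bc a b1 b2 γ : ℝ)*lam + (Cc a b1 b2 γ : ℝ)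
    - (c^2 : ℝ) * (2*lam + (b1 + b2 : ℝ)) * Complex.exp ((-2) * lam * (τ : ℝ))
    + 2*(τ : ℝ)*(c^2 : ℝ)*(lam + (b1 : ℝ))*(lam + (b2 : ℝ)) * Complex.exp ((-2) * lam * (τ : ℝ))

set_option maxHeartbeats 4000000

/-- if h(ω²) = 0 and h′(ω²) ≠ 0, then iω is a simple root of Δ_{c,τ}
with τ = τ^{(j)}(ω). -/
theorem stmt8 (a b1 b2 γ c : ℝ)
    (ha : 0 < a) (hb1 : 0 < b1) (hb2 : 0 < b2) (hγ : 0 < γ) (hc : c ≠ 0)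
    (j : ℕ) (ω : ℝ) (hω : 0 < ω)
    (hroot : hq a b1 b2 γ c (ω^2) = 0) (hroot' : hq' a b1 b2 γ c (ω^2) ≠ 0) :
    charFun a b1 b2 γ c (tauJ a b1 b2 γ c j ω) (Complex.I * (ω : ℂ)) = 0 ∧
    dcharFun a b1 b2 γ c (tauJ a b1 b2 γ c j ω) (Complex.I * (ω : ℂ)) ≠ 0 := by
  have hc2 : (0:ℝ) < c^2 := by positivity
  have hNpos : 0 < Nfun b1 b2 c ω := by
    have h2 : 0 < (b1+b2)^2*ω^2 := by positivity
    have h3 : 0 ≤ (ω^2 - b1*b2)^2 := sq_nonneg _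
    unfold Nfun; nlinarith
  have hNne : Nfun b1 b2 c ω ≠ 0 := ne_of_gt hNpos
  have hroot2 := hroot
  unfold hq Pc Qc Rc Sc Ac Bc Cc Dc at hroot2
  have hcirc : (aStar a b1 b2 γ c ω)^2 + (bStar a b1 b2 γ c ω)^2 = 1 := by
    unfold aStar bStar
    rw [div_pow, div_pow, ← add_div, div_eq_one_iff_eq (pow_ne_zero 2 hNne)]
    unfold Nfun Ac Bc Cc Dc
    linear_combination ((b1*b2-ω^2)^2 + ω^2*(b1+b2)^2) * hroot2
  have hbS1 : -1 ≤ bStar a b1 b2 γ c ω := by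
    nlinarith [sq_nonneg (aStar a b1 b2 γ c ω), sq_nonneg (bStar a b1 b2 γ c ω + 1)]
  have hbS2 : bStar a b1 b2 γ c ω ≤ 1 := by
    nlinarith [sq_nonneg (aStar a b1 b2 γ c ω), sq_nonneg (bStar a b1 b2 γ c ω - 1)]
  have hω' : (2*ω) ≠ 0 := by positivity
  have hcos : Real.cos (2*ω*tauJ a b1 b2 γ c j ω) = bStar a b1 b2 γ c ω := by
    unfold tauJ
    rcases le_or_gt 0 (aStar a b1 b2 γ c ω) with h|h
    · rw [if_pos h,
        show 2*ω*((1/(2*ω)) * (Real.arccos (bStar a b1 b2 γ c ω) + 2*(j:ℝ)*Real.pi))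
          = Real.arccos (bStar a b1 b2 γ c ω) + (j:ℝ)*(2*Real.pi) by field_simp,
        Real.cos_add_nat_mul_two_pi, Real.cos_arccos hbS1 hbS2]
    · rw [if_neg (not_le.mpr h),
        show 2*ω*((1/(2*ω)) * (2*Real.pi - Real.arccos (bStar a b1 b2 γ c ω) + 2*(j:ℝ)*Real.pi))
          = (2*Real.pi - Real.arccos (bStar a b1 b2 γ c ω)) + (j:ℝ)*(2*Real.pi) by
            field_simp,
        Real.cos_add_nat_mul_two_pi, Real.cos_sub, Real.cos_two_pi, Real.sin_two_pi,
        Real.cos_arccos hbS1 hbS2]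
      ring
  have hsin : Real.sin (2*ω*tauJ a b1 b2 γ c j ω) = aStar a b1 b2 γ c ω := by
    unfold tauJ
    rcases le_or_gt 0 (aStar a b1 b2 γ c ω) with h|h
    · rw [if_pos h,
        show 2*ω*((1/(2*ω)) * (Real.arccos (bStar a b1 b2 γ c ω) + 2*(j:ℝ)*Real.pi))
          = Real.arccos (bStar a b1 b2 γ c ω) + (j:ℝ)*(2*Real.pi) by field_simp,
        Real.sin_add_nat_mul_two_pi, Real.sin_arccos,
        show 1 - (bStar a b1 b2 γ c ω)^2 = (aStar a b1 b2 γ c ω)^2 by linarith,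
        Real.sqrt_sq h]
    · rw [if_neg (not_le.mpr h),
        show 2*ω*((1/(2*ω)) * (2*Real.pi - Real.arccos (bStar a b1 b2 γ c ω) + 2*(j:ℝ)*Real.pi))
          = (2*Real.pi - Real.arccos (bStar a b1 b2 γ c ω)) + (j:ℝ)*(2*Real.pi) by
            field_simp,
        Real.sin_add_nat_mul_two_pi, Real.sin_sub, Real.cos_two_pi, Real.sin_two_pi,
        Real.sin_arccos,
        show 1 - (bStar a b1 b2 γ c ω)^2 = (aStar a b1 b2 γ c ω)^2 by linarith,
        Real.sqrt_sq_eq_abs, abs_of_neg h]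
      ring
  have hE : Complex.exp ((-2) * (Complex.I * (ω:ℂ)) * ((tauJ a b1 b2 γ c j ω : ℝ) : ℂ))
      = ((bStar a b1 b2 γ c ω : ℝ) : ℂ) - ((aStar a b1 b2 γ c ω : ℝ) : ℂ) * Complex.I := by
    rw [show (-2 : ℂ) * (Complex.I * (ω:ℂ)) * ((tauJ a b1 b2 γ c j ω : ℝ) : ℂ)
        = ((-(2*ω*tauJ a b1 b2 γ c j ω) : ℝ) : ℂ) * Complex.I by push_cast; ring,
      Complex.exp_mul_I, ← Complex.ofReal_cos, ← Complex.ofReal_sin, Real.cos_neg,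
      Real.sin_neg, hcos, hsin]
    push_cast; ring
  have hN2 : c^2*((b1+b2)^2*ω^2 + (ω^2 - b1*b2)^2) ≠ 0 := by unfold Nfun at hNne; exact hNne
  have hEq1 : charFun a b1 b2 γ c (tauJ a b1 b2 γ c j ω) (Complex.I * (ω : ℂ)) = 0 := by
    unfold charFun
    rw [hE, Complex.ext_iff]
    constructor
    · simp [pow_succ]
      unfold aStar bStar Nfun
      field_simp
      unfold Ac Bc Cc Dc
      ring
    · simp [pow_succ]
      unfold aStar bStar Nfun
      field_simp
      unfold Ac Bc Cc Dc
      ring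
  refine ⟨hEq1, ?_⟩
  intro hD0
  have hcE : ((c^2 : ℝ) : ℂ) * ((Complex.I * (ω:ℂ) + (b1:ℝ)) * (Complex.I * (ω:ℂ) + (b2:ℝ)))
      * Complex.exp ((-2) * (Complex.I * (ω:ℂ)) * ((tauJ a b1 b2 γ c j ω : ℝ) : ℂ))
      = ((Complex.I * (ω:ℂ))^2 + ((a+b1 : ℝ):ℂ)*(Complex.I * (ω:ℂ)) + ((a*b1+γ : ℝ):ℂ))
        * ((Complex.I * (ω:ℂ))^2 + ((a+b2 : ℝ):ℂ)*(Complex.I * (ω:ℂ)) + ((a*b2+γ : ℝ):ℂ)) := by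
    have h := hEq1
    unfold charFun at h
    linear_combination -h
  unfold dcharFun at hD0
  have hK : (4*(Complex.I * (ω:ℂ))^3 + 3*((Ac a b1 b2 : ℝ):ℂ)*(Complex.I * (ω:ℂ))^2
        + 2*((Bc a b1 b2 γ : ℝ):ℂ)*(Complex.I * (ω:ℂ)) + ((Cc a b1 b2 γ : ℝ):ℂ))
        * ((Complex.I * (ω:ℂ) + (b1:ℝ)) * (Complex.I * (ω:ℂ) + (b2:ℝ)))
      - (2*(Complex.I * (ω:ℂ)) + ((b1+b2 : ℝ):ℂ))
        * (((Complex.I * (ω:ℂ))^2 + ((a+b1 : ℝ):ℂ)*(Complex.I * (ω:ℂ)) + ((a*b1+γ : ℝ):ℂ))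
          * ((Complex.I * (ω:ℂ))^2 + ((a+b2 : ℝ):ℂ)*(Complex.I * (ω:ℂ)) + ((a*b2+γ : ℝ):ℂ)))
      + 2*((tauJ a b1 b2 γ c j ω : ℝ):ℂ)
        * (((Complex.I * (ω:ℂ))^2 + ((a+b1 : ℝ):ℂ)*(Complex.I * (ω:ℂ)) + ((a*b1+γ : ℝ):ℂ))
          * ((Complex.I * (ω:ℂ))^2 + ((a+b2 : ℝ):ℂ)*(Complex.I * (ω:ℂ)) + ((a*b2+γ : ℝ):ℂ)))
        * ((Complex.I * (ω:ℂ) + (b1:ℝ)) * (Complex.I * (ω:ℂ) + (b2:ℝ))) = 0 := by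
    linear_combination ((Complex.I * (ω:ℂ) + (b1:ℝ)) * (Complex.I * (ω:ℂ) + (b2:ℝ))) * hD0
      - (2*((tauJ a b1 b2 γ c j ω : ℝ):ℂ) * ((Complex.I * (ω:ℂ) + (b1:ℝ)) * (Complex.I * (ω:ℂ) + (b2:ℝ)))
         - (2*(Complex.I * (ω:ℂ)) + ((b1+b2 : ℝ):ℂ))) * hcE
  have hKr := congrArg Complex.re hK
  have hKi := congrArg Complex.im hK
  simp [pow_succ] at hKr hKi
  simp only [Ac, Bc, Cc, Dc] at hKr hKi
  have hroot3 := hroot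
  unfold hq Pc Qc Rc Sc Ac Bc Cc Dc at hroot3
  have hT : ω*((b1*b2 - ω^2)^2 + (ω*(b1+b2))^2) * hq' a b1 b2 γ c (ω^2) = 0 := by
    unfold hq' Pc Qc Rc Ac Bc Cc Dc
    linear_combination
      (-((ω^4 - (2*a*(b1+b2) + a^2 + b1*b2 + 2*γ)*ω^2 + (a*b1+γ)*(a*b2+γ))*(b1*b2 - ω^2)
        - (((a+b1)*(a*b2+γ) + (a+b2)*(a*b1+γ))*ω - (b1 + b2 + 2*a)*ω^3)*(ω*(b1+b2)))) * hKi
      + ((ω^4 - (2*a*(b1+b2) + a^2 + b1*b2 + 2*γ)*ω^2 + (a*b1+γ)*(a*b2+γ))*(ω*(b1+b2))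
        + (((a+b1)*(a*b2+γ) + (a+b2)*(a*b1+γ))*ω - (b1 + b2 + 2*a)*ω^3)*(b1*b2 - ω^2)) * hKr
      - ((2*ω)*(b1*b2 - ω^2) - (b1+b2)*(ω*(b1+b2))) * hroot3
  have hpos : (0:ℝ) < ω*((b1*b2 - ω^2)^2 + (ω*(b1+b2))^2) := by
    have h4 : (0:ℝ) < (ω*(b1+b2))^2 := by positivity
    nlinarith [sq_nonneg (b1*b2 - ω^2)]
  rcases mul_eq_zero.mp hT with h|h
  · exact absurd h (ne_of_gt hpos)
  · exact hroot' h
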